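/- Deterministic Dantzig-selector error bound: consider the linear model y_i = z_i'β + ε_i with fixed design, and let β̂ minimize ‖b‖_{ℓ₁} subject to √n max_{1≤j≤p} |E_n[z_{ij}(y_i − z_i'b)]| ≤ λ. On the event {√n max_{1≤j≤p} |E_n[z_{ij} ε_i]| ≤ λ}, the error δ̂ = β̂ − β satisfies δ̂ ∈ R(β) := {δ : ‖β+δ‖_{ℓ₁} ≤ ‖β‖_{ℓ₁}}, √n max_{1≤j≤p} |E_n[z_{ij}(z_i' δ̂)]| ≤ 2λ, and consequently ‖δ̂‖_I ≤ 2λ/(√n κ_I(β)) for any seminorm ‖·‖_I with identifiability factor κ_I(β) = inf{ max_j |E_n[z_{ij}(z_i'δ)]|/‖δ‖_I : δ ∈ R(β), ‖δ‖_I ≠ 0 }. -/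
import Mathlib


/-- `ℓ₁`-norm on `ℝ^p`. -/
noncomputable def l1Norm {p : ℕ} (b : Fin p → ℝ) : ℝ := ∑ j, |b j|

/-- The maximal empirical correlation
`√n max_j |E_n[z_{ij}(y_i − z_i'b)]|` appearing in the Dantzig constraint. -/
noncomputable def dantzigScore (n p : ℕ) (hp : 0 < p) (z : Fin n → Fin p → ℝ)
    (y : Fin n → ℝ) (b : Fin p → ℝ) : ℝ :=
  Real.sqrt n * Finset.univ.sup' ⟨⟨0, hp⟩, Finset.mem_univ _⟩ fun j =>
    |(n : ℝ)⁻¹ * ∑ i, z i j * (y i - ∑ k, z i k * b k)|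

/-- Deterministic Dantzig-selector error bound: in the linear model
`y_i = z_i'β + ε_i`, if `β̂` minimizes `‖b‖₁` subject to the Dantzig constraint
with penalty `λ`, then on the event `√n max_j |E_n[z_{ij}ε_i]| ≤ λ`, the error
`δ̂ = β̂ − β` satisfies `δ̂ ∈ R(β)`, `√n max_j |E_n[z_{ij}(z_i'δ̂)]| ≤ 2λ` and
`κ_I(β) ‖δ̂‖_I ≤ 2λ/√n` for any seminorm `‖·‖_I`, where
`κ_I(β) = inf { max_j |E_n[z_{ij}(z_i'δ)]| / ‖δ‖_I : δ ∈ R(β), ‖δ‖_I ≠ 0 }`. -/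
theorem dantzig_selector_deterministic_bound (n p : ℕ) (hn : 0 < n) (hp : 0 < p)
    (z : Fin n → Fin p → ℝ) (β : Fin p → ℝ) (ε : Fin n → ℝ)
    (y : Fin n → ℝ) (hy : ∀ i, y i = (∑ j, z i j * β j) + ε i)
    (lam : ℝ) (hlam : 0 < lam)
    (βhat : Fin p → ℝ)
    (hfeas : dantzigScore n p hp z y βhat ≤ lam)
    (hmin : ∀ b : Fin p → ℝ, dantzigScore n p hp z y b ≤ lam →
      l1Norm βhat ≤ l1Norm b)
    (hevent : Real.sqrt n * (Finset.univ.sup' ⟨⟨0, hp⟩, Finset.mem_univ _⟩ fun j =>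
      |(n : ℝ)⁻¹ * ∑ i, z i j * ε i|) ≤ lam)
    (I : Seminorm ℝ (Fin p → ℝ)) :
    l1Norm (β + (βhat - β)) ≤ l1Norm β ∧
    Real.sqrt n * (Finset.univ.sup' ⟨⟨0, hp⟩, Finset.mem_univ _⟩ fun j =>
        |(n : ℝ)⁻¹ * ∑ i, z i j * (∑ k, z i k * (βhat k - β k))|) ≤ 2 * lam ∧
    sInf {r : ℝ | ∃ δ : Fin p → ℝ, l1Norm (β + δ) ≤ l1Norm β ∧ I δ ≠ 0 ∧
        r = (Finset.univ.sup' ⟨⟨0, hp⟩, Finset.mem_univ _⟩ fun j =>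
            |(n : ℝ)⁻¹ * ∑ i, z i j * (∑ k, z i k * δ k)|) / I δ} *
        I (βhat - β) ≤ 2 * lam / Real.sqrt n := by
  classical
  have hn' : (0:ℝ) < n := by exact_mod_cast hn
  have hs : (0:ℝ) < Real.sqrt n := Real.sqrt_pos.mpr hn'
  have j0 : Fin p := ⟨0, hp⟩
  -- β is feasible
  have hβfeas : dantzigScore n p hp z y β ≤ lam := by
    have : dantzigScore n p hp z y β
        = Real.sqrt n * (Finset.univ.sup' ⟨⟨0, hp⟩, Finset.mem_univ _⟩ fun j =>
          |(n : ℝ)⁻¹ * ∑ i, z i j * ε i|) := by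
      unfold dantzigScore
      congr 1
      apply Finset.sup'_congr _ rfl
      intro j _
      congr 1
      congr 1
      apply Finset.sum_congr rfl
      intro i _
      rw [hy i]; ring
    rw [this]; exact hevent
  have h1 : l1Norm (β + (βhat - β)) ≤ l1Norm β := by
    have hβ : β + (βhat - β) = βhat := by ring
    rw [hβ]; exact hmin β hβfeas
  -- decomposition
  have hsum : ∀ i, (∑ k, z i k * (βhat k - β k))
      = (∑ k, z i k * βhat k) - ∑ k, z i k * β k := by
    intro i
    rw [← Finset.sum_sub_distrib]
    exact Finset.sum_congr rfl fun k _ => mul_sub _ _ _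
  have hC : ∀ j : Fin p, (n : ℝ)⁻¹ * ∑ i, z i j * (∑ k, z i k * (βhat k - β k))
      = ((n : ℝ)⁻¹ * ∑ i, z i j * ε i)
        - ((n : ℝ)⁻¹ * ∑ i, z i j * (y i - ∑ k, z i k * βhat k)) := by
    intro j
    rw [← mul_sub, ← Finset.sum_sub_distrib]
    congr 1
    apply Finset.sum_congr rfl
    intro i _
    rw [hsum i, hy i]; ring
  set ne0 : Finset.univ.Nonempty := ⟨(⟨0, hp⟩ : Fin p), Finset.mem_univ _⟩ with hne0
  have h2 : Real.sqrt n * (Finset.univ.sup' ⟨⟨0, hp⟩, Finset.mem_univ _⟩ fun j =>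
      |(n : ℝ)⁻¹ * ∑ i, z i j * (∑ k, z i k * (βhat k - β k))|) ≤ 2 * lam := by
    have hsup : (Finset.univ.sup' ⟨⟨0, hp⟩, Finset.mem_univ _⟩ fun j =>
        |(n : ℝ)⁻¹ * ∑ i, z i j * (∑ k, z i k * (βhat k - β k))|)
        ≤ (Finset.univ.sup' ⟨⟨0, hp⟩, Finset.mem_univ _⟩ fun j =>
            |(n : ℝ)⁻¹ * ∑ i, z i j * ε i|)
          + (Finset.univ.sup' ⟨⟨0, hp⟩, Finset.mem_univ _⟩ fun j =>
            |(n : ℝ)⁻¹ * ∑ i, z i j * (y i - ∑ k, z i k * βhat k)|) := by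
      apply Finset.sup'_le
      intro j _
      rw [hC j]
      refine (abs_sub _ _).trans (add_le_add ?_ ?_)
      · exact Finset.le_sup' (fun j => |(n : ℝ)⁻¹ * ∑ i, z i j * ε i|) (Finset.mem_univ j)
      · exact Finset.le_sup'
          (fun j => |(n : ℝ)⁻¹ * ∑ i, z i j * (y i - ∑ k, z i k * βhat k)|)
          (Finset.mem_univ j)
    calc Real.sqrt n * _ ≤ Real.sqrt n *
          ((Finset.univ.sup' ⟨⟨0, hp⟩, Finset.mem_univ _⟩ fun j =>
            |(n : ℝ)⁻¹ * ∑ i, z i j * ε i|)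
          + (Finset.univ.sup' ⟨⟨0, hp⟩, Finset.mem_univ _⟩ fun j =>
            |(n : ℝ)⁻¹ * ∑ i, z i j * (y i - ∑ k, z i k * βhat k)|)) :=
          mul_le_mul_of_nonneg_left hsup hs.le
      _ ≤ lam + lam := by
          rw [mul_add]
          exact add_le_add hevent hfeas
      _ = 2 * lam := by ring
  refine ⟨h1, h2, ?_⟩
  -- third part
  set δ := βhat - β with hδ
  set S : Set ℝ := {r : ℝ | ∃ δ : Fin p → ℝ, l1Norm (β + δ) ≤ l1Norm β ∧ I δ ≠ 0 ∧
      r = (Finset.univ.sup' ⟨⟨0, hp⟩, Finset.mem_univ _⟩ fun j =>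
          |(n : ℝ)⁻¹ * ∑ i, z i j * (∑ k, z i k * δ k)|) / I δ} with hS
  have hsupnn : ∀ (d : Fin p → ℝ), 0 ≤ Finset.univ.sup' ⟨(⟨0, hp⟩ : Fin p), Finset.mem_univ _⟩
      (fun j => |(n : ℝ)⁻¹ * ∑ i, z i j * (∑ k, z i k * d k)|) := by
    intro d
    exact le_trans (abs_nonneg _)
      (Finset.le_sup' (fun j => |(n : ℝ)⁻¹ * ∑ i, z i j * (∑ k, z i k * d k)|)
        (Finset.mem_univ (⟨0, hp⟩ : Fin p)))
  have hbdd : BddBelow S := by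
    refine ⟨0, fun x hx => ?_⟩
    obtain ⟨d, _, _, hxeq⟩ := hx
    rw [hxeq]
    exact div_nonneg (hsupnn d) (apply_nonneg I d)
  by_cases hIδ : I δ = 0
  · rw [hIδ, mul_zero]
    positivity
  · have hIδpos : 0 < I δ := lt_of_le_of_ne (apply_nonneg I δ) (Ne.symm hIδ)
    have hmem : ((Finset.univ.sup' ⟨⟨0, hp⟩, Finset.mem_univ _⟩ fun j =>
        |(n : ℝ)⁻¹ * ∑ i, z i j * (∑ k, z i k * δ k)|) / I δ) ∈ S :=
      ⟨δ, h1, hIδ, rfl⟩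
    have hinf := csInf_le hbdd hmem
    have hsupC : (Finset.univ.sup' ⟨⟨0, hp⟩, Finset.mem_univ _⟩ fun j =>
        |(n : ℝ)⁻¹ * ∑ i, z i j * (∑ k, z i k * δ k)|) ≤ 2 * lam / Real.sqrt n := by
      rw [le_div_iff₀ hs, mul_comm]
      exact h2
    calc sInf S * I δ ≤ ((Finset.univ.sup' ⟨⟨0, hp⟩, Finset.mem_univ _⟩ fun j =>
          |(n : ℝ)⁻¹ * ∑ i, z i j * (∑ k, z i k * δ k)|) / I δ) * I δ :=
        mul_le_mul_of_nonneg_right hinf (apply_nonneg I δ)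
      _ = _ := div_mul_cancel₀ _ hIδ
      _ ≤ 2 * lam / Real.sqrt n := hsupC
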